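/- Let r ≥ 0, let D ∈ D_n be a Dyck word, and let D' = Ψ_r(D). Then the number of tunnels of D with midpoint at x = n+r (i.e., decompositions D = AuBdC with B a Dyck word and length(A) = length(C) + 2r) equals the number of hills of D' lying in x > 2r (i.e., decompositions D' = XudY with X, Y Dyck words and length(X) ≥ 2r). -/

import Mathlib

attribute [local instance] Classical.propDecidable

namespace DyckBij

/-- A word over `Bool` (`true` = up-step `u`, `false` = down-step `d`) is a Dyck word:
equally many `u`'s and `d`'s, and every prefix has at least as many `u`'s as `d`'s. -/
def IsDyck (w : List Bool) : Prop :=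
  w.count false = w.count true ∧
    ∀ p : List Bool, p <+: w → p.count false ≤ p.count true

/-- `Matched w i j`: the `u` at (0-indexed) position `i` of `w` is matched (as in matched
parentheses) with the `d` at position `j`, i.e. `w = A u B d C` with `B` a Dyck word,
`|A| = i` and `j = i + |B| + 1`. -/
def Matched (w : List Bool) (i j : ℕ) : Prop :=
  ∃ A B C : List Bool, IsDyck B ∧ w = A ++ true :: (B ++ false :: C) ∧
    A.length = i ∧ j = i + B.length + 1

/-- Positions `i` and `j` form a matched pair of steps of `w`. -/
def MatchPair (w : List Bool) (i j : ℕ) : Prop :=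
  Matched w i j ∨ Matched w j i

/-- The 0-indexed reading order `σ^{(r)}` on a word of length `L`: the first `2r` positions
are read in order, and the remaining positions are read in zigzag
`2r, L-1, 2r+1, L-2, …` (0-indexed). For `r = 0` this is the zigzag order `σ`. -/
def zigR (r L p : ℕ) : ℕ :=
  if p < 2 * r then p
  else if p % 2 = 0 then p / 2 + r
  else L + r - (p + 1) / 2

/-- The bijection `Ψ_r`: the `p`-th letter of `Ψ_r(w)` is `u` iff the match of the
`σ^{(r)}_p`-th step of `w` does not occur among the previously read steps
`σ^{(r)}_0, …, σ^{(r)}_{p-1}`. -/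
noncomputable def psiR (r : ℕ) (w : List Bool) : List Bool :=
  List.ofFn fun p : Fin w.length =>
    if ∃ p' : ℕ, p' < (p : ℕ) ∧
        MatchPair w (zigR r w.length p') (zigR r w.length (p : ℕ))
    then false else true

/-- The bijection `Ψ = Ψ_0`. -/
noncomputable def psi : List Bool → List Bool := psiR 0

/-- Number of tunnels of `w` with `|A| = |C| + 2r` (midpoint at `x = n + r`),
i.e. decompositions `w = A u B d C` with `B` a Dyck word; tunnels are indexed by `|A|`. -/
noncomputable def tunEq (r : ℕ) (w : List Bool) : ℕ :=
  {i : ℕ | ∃ A B C : List Bool, IsDyck B ∧ w = A ++ true :: (B ++ false :: C) ∧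
    A.length = i ∧ A.length = C.length + 2 * r}.ncard

/-- Number of tunnels of `w` with `|A| > |C| + 2r` (midpoint in `x > n + r`). -/
noncomputable def tunGt (r : ℕ) (w : List Bool) : ℕ :=
  {i : ℕ | ∃ A B C : List Bool, IsDyck B ∧ w = A ++ true :: (B ++ false :: C) ∧
    A.length = i ∧ C.length + 2 * r < A.length}.ncard

/-- Number of tunnels of `w` with `|A| ≤ |C| + 2r` (midpoint in `x ≤ n + r`). -/
noncomputable def tunLe (r : ℕ) (w : List Bool) : ℕ :=
  {i : ℕ | ∃ A B C : List Bool, IsDyck B ∧ w = A ++ true :: (B ++ false :: C) ∧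
    A.length = i ∧ A.length ≤ C.length + 2 * r}.ncard

/-- Number of centered tunnels `ct(w)`. -/
noncomputable def ctun (w : List Bool) : ℕ := tunEq 0 w

/-- Number of right tunnels `rt(w)`. -/
noncomputable def rtun (w : List Bool) : ℕ := tunGt 0 w

/-- Number of left tunnels `lt(w)`: tunnels with `|A| < |C|`. -/
noncomputable def ltun (w : List Bool) : ℕ :=
  {i : ℕ | ∃ A B C : List Bool, IsDyck B ∧ w = A ++ true :: (B ++ false :: C) ∧
    A.length = i ∧ A.length < C.length}.ncard

/-- Number of multitunnels of `w` with `|A| = |C| + 2r` (midpoint at `x = n + r`):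
decompositions `w = A B C` with `B` a nonempty Dyck word, indexed by `(|A|, |B|)`. -/
noncomputable def mtunEq (r : ℕ) (w : List Bool) : ℕ :=
  {q : ℕ × ℕ | ∃ A B C : List Bool, IsDyck B ∧ B ≠ [] ∧ w = A ++ B ++ C ∧
    A.length = q.1 ∧ B.length = q.2 ∧ A.length = C.length + 2 * r}.ncard

/-- Number of centered multitunnels `cmt(w)`. -/
noncomputable def cmtun (w : List Bool) : ℕ := mtunEq 0 w

/-- Number of hills `h(w)`: decompositions `w = X u d Y` with `X, Y` Dyck words. -/
noncomputable def numHills (w : List Bool) : ℕ :=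
  {i : ℕ | ∃ X Y : List Bool, IsDyck X ∧ IsDyck Y ∧
    w = X ++ true :: false :: Y ∧ X.length = i}.ncard

/-- Number of hills of `w` lying in `x > 2r`, i.e. with `|X| ≥ 2r`. -/
noncomputable def numHillsAfter (r : ℕ) (w : List Bool) : ℕ :=
  {i : ℕ | ∃ X Y : List Bool, IsDyck X ∧ IsDyck Y ∧
    w = X ++ true :: false :: Y ∧ X.length = i ∧ 2 * r ≤ X.length}.ncard

/-- Number of arches (equivalently, returns) `ret(w)`: decompositions
`w = X (u B d) Y` with `X, B, Y` Dyck words. -/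
noncomputable def numArches (w : List Bool) : ℕ :=
  {i : ℕ | ∃ X B Y : List Bool, IsDyck X ∧ IsDyck B ∧ IsDyck Y ∧
    w = X ++ true :: (B ++ false :: Y) ∧ X.length = i}.ncard

/-- Number of arches of `w` lying in `x ≥ 2r`, i.e. with `|X| ≥ 2r`. -/
noncomputable def numArchesAfter (r : ℕ) (w : List Bool) : ℕ :=
  {i : ℕ | ∃ X B Y : List Bool, IsDyck X ∧ IsDyck B ∧ IsDyck Y ∧
    w = X ++ true :: (B ++ false :: Y) ∧ X.length = i ∧ 2 * r ≤ X.length}.ncard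

/-- Number of odd rises `odr(w)`: `u`-steps at odd 1-indexed positions
(even 0-indexed positions). -/
noncomputable def oddRises (w : List Bool) : ℕ :=
  {p : ℕ | p < w.length ∧ p % 2 = 0 ∧ w.getD p false = true}.ncard

/-- Number of even rises `er(w)`: `u`-steps at even 1-indexed positions
(odd 0-indexed positions). -/
noncomputable def evenRises (w : List Bool) : ℕ :=
  {p : ℕ | p < w.length ∧ p % 2 = 1 ∧ w.getD p false = true}.ncard

/-- Number of odd rises of `w` at 1-indexed positions `> 2r`. -/
noncomputable def oddRisesAfter (r : ℕ) (w : List Bool) : ℕ :=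
  {p : ℕ | p < w.length ∧ p % 2 = 0 ∧ 2 * r ≤ p ∧ w.getD p false = true}.ncard

/-- Number of even rises of `w` at 1-indexed positions `> 2r`. -/
noncomputable def evenRisesAfter (r : ℕ) (w : List Bool) : ℕ :=
  {p : ℕ | p < w.length ∧ p % 2 = 1 ∧ 2 * r ≤ p ∧ w.getD p false = true}.ncard

/-- Number of `u`-steps of `w` at 1-indexed positions `≤ 2r`. -/
noncomputable def upstepsBefore (r : ℕ) (w : List Bool) : ℕ :=
  {p : ℕ | p < w.length ∧ p < 2 * r ∧ w.getD p false = true}.ncard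

/-- Number of peaks of `w`: occurrences of the factor `u d`. -/
noncomputable def numPeaks (w : List Bool) : ℕ :=
  {i : ℕ | i + 2 ≤ w.length ∧ w.getD i false = true ∧ w.getD (i + 1) true = false}.ncard

/-- Number of occurrences in `w` of a factor of length 3 beginning with `u`
and ending with `d` (occurrences of `u⋆d`). -/
noncomputable def numUStarD (w : List Bool) : ℕ :=
  {i : ℕ | i + 3 ≤ w.length ∧ w.getD i false = true ∧ w.getD (i + 2) true = false}.ncard

/-- `ih(w)`: 1 if `w` begins with the factor `u d`, else 0. -/
noncomputable def initHill (w : List Bool) : ℕ :=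
  if w.take 2 = [true, false] then 1 else 0

/-- `fh(w)`: 1 if `w = X u d` with `X` a Dyck word, else 0. -/
noncomputable def finHill (w : List Bool) : ℕ :=
  if ∃ X : List Bool, IsDyck X ∧ w = X ++ [true, false] then 1 else 0

/-- `π` avoids the pattern 321. -/
def Avoids321 {n : ℕ} (π : Equiv.Perm (Fin n)) : Prop :=
  ¬ ∃ i j k : Fin n, i < j ∧ j < k ∧ π k < π j ∧ π j < π i

/-- `π` avoids the pattern 132. -/
def Avoids132 {n : ℕ} (π : Equiv.Perm (Fin n)) : Prop :=
  ¬ ∃ i j k : Fin n, i < j ∧ j < k ∧ π i < π k ∧ π k < π j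

/-- Number of fixed points of `π`. -/
noncomputable def fixedPts {n : ℕ} (π : Equiv.Perm (Fin n)) : ℕ :=
  {i : Fin n | π i = i}.ncard

/-- Number of excedances of `π`. -/
noncomputable def excedances {n : ℕ} (π : Equiv.Perm (Fin n)) : ℕ :=
  {i : Fin n | i < π i}.ncard

/-- Number of descents of `π`. -/
noncomputable def descents {n : ℕ} (π : Equiv.Perm (Fin n)) : ℕ :=
  {i : ℕ | ∃ (h1 : i < n) (h2 : i + 1 < n), π ⟨i + 1, h2⟩ < π ⟨i, h1⟩}.ncard

/-- `α_r(π) = #{i : π(i) = i + r}` (stated 0-indexed, equivalent to the 1-indexed version). -/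
noncomputable def alphaStat {n : ℕ} (r : ℕ) (π : Equiv.Perm (Fin n)) : ℕ :=
  {i : Fin n | (π i : ℕ) = (i : ℕ) + r}.ncard

/-- `β_r(π) = #{i : i > r, π(i) = i}` (for 1-indexed `i`; 0-indexed this is `r ≤ i`). -/
noncomputable def betaStat {n : ℕ} (r : ℕ) (π : Equiv.Perm (Fin n)) : ℕ :=
  {i : Fin n | r ≤ (i : ℕ) ∧ π i = i}.ncard
section Basics
open List

variable {w A B C P : List Bool} {i j : ℕ}

/-- height of `w` after `k` steps, as an integer. -/
def hgt (w : List Bool) (k : ℕ) : ℤ :=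
  ((w.take k).count true : ℤ) - ((w.take k).count false : ℤ)

lemma IsDyck.hgt_nonneg (hw : IsDyck w) (k : ℕ) : 0 ≤ hgt w k := by
  have := hw.2 (w.take k) (List.take_prefix _ _)
  unfold hgt; omega

lemma prefix_eq_take (h : P <+: w) : P = w.take P.length := by
  obtain ⟨t, rfl⟩ := h
  simp

lemma Matched.lt (h : Matched w i j) : i < j := by
  obtain ⟨A, B, C, hB, hw, hA, hj⟩ := h; omega

lemma Matched.lt_length (h : Matched w i j) : j < w.length := by
  obtain ⟨A, B, C, hB, hw, hA, hj⟩ := h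
  subst hw; simp; omega

lemma Matched.getElem_left (h : Matched w i j) : w[i]? = some true := by
  obtain ⟨A, B, C, hB, hw, hA, hj⟩ := h
  subst hw
  subst hA
  rw [List.getElem?_append_right (by omega)]
  simp

lemma Matched.getElem_right (h : Matched w i j) : w[j]? = some false := by
  obtain ⟨A, B, C, hB, hw, hA, hj⟩ := h
  subst hw
  rw [show A ++ true :: (B ++ false :: C) = (A ++ true :: B) ++ false :: C by simp]
  rw [List.getElem?_append_right (by simp; omega)]
  have : j - (A.length + (B.length + 1)) = 0 := by omega
  simp [this]

end Basics
section Heights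
open List

variable {w A B C P : List Bool} {i j k : ℕ}

lemma Matched.hgt_lt (h : Matched w i j) (h1 : i < k) (h2 : k ≤ j) :
    hgt w i < hgt w k := by
  obtain ⟨A, B, C, hB, hw, hA, hj⟩ := h
  have hwi : w.take i = A := by subst hw; rw [← hA]; exact List.take_left
  have hwk : w.take k = A ++ true :: B.take (k - (i+1)) := by
    subst hw
    rw [List.take_append, List.take_of_length_le (by omega)]
    congr 1
    have hk : k - A.length = (k - (i+1)) + 1 := by omega
    rw [hk, List.take_succ_cons]
    congr 1
    exact List.take_append_of_le_length (by omega)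
  have hp := hB.2 (B.take (k - (i+1))) (List.take_prefix _ _)
  unfold hgt
  rw [hwi, hwk]
  simp [List.count_append]
  omega

lemma Matched.hgt_eq (h : Matched w i j) : hgt w (j + 1) = hgt w i := by
  obtain ⟨A, B, C, hB, hw, hA, hj⟩ := h
  have hwi : w.take i = A := by subst hw; rw [← hA]; exact List.take_left
  have hwk : w.take (j + 1) = A ++ true :: (B ++ [false]) := by
    subst hw
    rw [List.take_append, List.take_of_length_le (by omega)]
    congr 1
    have hk : j + 1 - A.length = (B.length + 1) + 1 := by omega
    rw [hk, List.take_succ_cons]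
    congr 1
    rw [List.take_append, List.take_of_length_le (by omega)]
    have : B.length + 1 - B.length = 1 := by omega
    simp [this]
  have hbal := hB.1
  unfold hgt
  rw [hwi, hwk]
  simp [List.count_append]
  omega

lemma Matched.unique_right (h : Matched w i j) (h' : Matched w i j') : j = j' := by
  by_contra hne
  rcases Nat.lt_or_ge j j' with hlt | hge
  · have e1 := h.hgt_eq
    have e2 := h'.hgt_lt (k := j + 1) (by have := h.lt; omega) (by omega)
    omega
  · have hlt : j' < j := by omega
    have e1 := h'.hgt_eq
    have e2 := h.hgt_lt (k := j' + 1) (by have := h'.lt; omega) (by omega)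
    omega

lemma Matched.unique_left (h : Matched w i j) (h' : Matched w i' j) : i = i' := by
  by_contra hne
  rcases Nat.lt_or_ge i i' with hlt | hge
  · have e1 := h.hgt_eq
    have e2 := h'.hgt_eq
    have e3 := h.hgt_lt (k := i') hlt (by have := h'.lt; omega)
    omega
  · have hlt : i' < i := by omega
    have e1 := h.hgt_eq
    have e2 := h'.hgt_eq
    have e3 := h'.hgt_lt (k := i) hlt (by have := h.lt; omega)
    omega

lemma MatchPair.symm (h : MatchPair w i j) : MatchPair w j i := h.elim Or.inr Or.inl

lemma MatchPair.unique (h : MatchPair w i j) (h' : MatchPair w i j') : j = j' := by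
  rcases h with h | h <;> rcases h' with h' | h'
  · exact h.unique_right h'
  · exact absurd h.getElem_left (by rw [h'.getElem_right]; simp)
  · exact absurd h.getElem_right (by rw [h'.getElem_left]; simp)
  · exact h.unique_left h'

end Heights
section Exists
open List

variable {w P : List Bool} {i j : ℕ}

/-- `count false - count true`, as an integer. -/
def dif (l : List Bool) : ℤ := (l.count false : ℤ) - l.count true

@[simp] lemma dif_nil : dif [] = 0 := rfl

lemma dif_append (a b : List Bool) : dif (a ++ b) = dif a + dif b := by
  simp [dif, List.count_append]; ring

lemma isDyck_iff {w : List Bool} :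
    IsDyck w ↔ dif w = 0 ∧ ∀ P, P <+: w → dif P ≤ 0 := by
  unfold IsDyck dif
  constructor
  · rintro ⟨h1, h2⟩
    refine ⟨by omega, fun P hP => ?_⟩
    have := h2 P hP; omega
  · rintro ⟨h1, h2⟩
    refine ⟨by omega, fun P hP => ?_⟩
    have := h2 P hP; omega

lemma exists_first (f : ℕ → ℤ) (M : ℕ) (h0 : f 0 = 0)
    (hstep : ∀ k < M, f (k + 1) = f k + 1 ∨ f (k + 1) = f k - 1)
    (hM : 1 ≤ f M) : ∃ m, 0 < m ∧ m ≤ M ∧ f m = 1 ∧ ∀ k < m, f k ≤ 0 := by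
  classical
  have hex : ∃ m, m ≤ M ∧ 1 ≤ f m := ⟨M, le_rfl, hM⟩
  obtain ⟨hmM, hfm⟩ := Nat.find_spec hex
  have hmin : ∀ k < Nat.find hex, f k ≤ 0 := by
    intro k hk
    by_contra hc
    exact Nat.find_min hex hk ⟨by omega, by omega⟩
  have hm0 : 0 < Nat.find hex := by
    by_contra h
    have h' : Nat.find hex = 0 := by omega
    rw [h'] at hfm
    omega
  have hprev := hmin (Nat.find hex - 1) (by omega)
  have hstep' := hstep (Nat.find hex - 1) (by omega)
  rw [show Nat.find hex - 1 + 1 = Nat.find hex by omega] at hstep'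
  exact ⟨_, hm0, hmM, by omega, hmin⟩

lemma dif_take_step (S : List Bool) {k : ℕ} (hk : k < S.length) :
    (S[k] = false ∧ dif (S.take (k + 1)) = dif (S.take k) + 1) ∨
    (S[k] = true ∧ dif (S.take (k + 1)) = dif (S.take k) - 1) := by
  have ht : S.take (k + 1) = S.take k ++ [S[k]] := by
    rw [List.take_succ, List.getElem?_eq_getElem hk]; rfl
  cases hb : S[k] with
  | true => right; rw [ht, hb, dif_append]; refine ⟨rfl, ?_⟩; simp [dif]; try omega
  | false => left; rw [ht, hb, dif_append]; refine ⟨rfl, ?_⟩; simp [dif]; try omega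

lemma exists_matched_of_true (hw : IsDyck w) (hi : w[i]? = some true) :
    ∃ j, Matched w i j := by
  obtain ⟨hwd, hwp⟩ := isDyck_iff.mp hw
  have hil : i < w.length := by
    by_contra hc
    rw [List.getElem?_eq_none (by omega)] at hi
    exact nomatch hi
  have hival : w[i] = true := by
    rw [List.getElem?_eq_getElem hil] at hi
    exact Option.some.inj hi
  set S := w.drop (i + 1) with hS
  have hstep : ∀ k < S.length,
      dif (S.take (k + 1)) = dif (S.take k) + 1 ∨
      dif (S.take (k + 1)) = dif (S.take k) - 1 := by
    intro k hk
    rcases dif_take_step S hk with ⟨_, h⟩ | ⟨_, h⟩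
    · exact Or.inl h
    · exact Or.inr h
  have hsplit : w = (w.take i ++ [true]) ++ S := by
    conv_lhs => rw [← List.take_append_drop (i + 1) w]
    congr 1
    rw [List.take_succ, List.getElem?_eq_getElem hil, hival]; rfl
  have hpre := hwp (w.take i) (List.take_prefix _ _)
  have hcnt : 1 ≤ dif (S.take S.length) := by
    rw [List.take_of_length_le (le_refl S.length)]
    rw [hsplit, dif_append, dif_append] at hwd
    have : dif [true] = -1 := by simp [dif]
    omega
  obtain ⟨m, hm0, hmM, hfm, hfk⟩ :=
    exists_first (fun m => dif (S.take m)) S.length (by simp) hstep hcnt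
  have hm1 : m - 1 < S.length := by omega
  have hprev : dif (S.take (m - 1)) ≤ 0 := by
    rcases Nat.eq_zero_or_pos (m - 1) with h | h
    · rw [h]; simp
    · exact hfk _ (by omega)
  have hstep' := hstep (m - 1) hm1
  rw [show m - 1 + 1 = m by omega] at hstep'
  have hfm1 : dif (S.take (m - 1)) = 0 := by omega
  have hlet : S[m - 1] = false := by
    rcases dif_take_step S hm1 with ⟨h, _⟩ | ⟨h, hd⟩
    · exact h
    · exfalso
      rw [show m - 1 + 1 = m by omega] at hd
      omega
  have hBdyck : IsDyck (S.take (m - 1)) := by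
    rw [isDyck_iff]
    refine ⟨hfm1, fun P hP => ?_⟩
    have hPlen : P.length ≤ m - 1 := le_trans hP.length_le (by simp)
    have hPeq : P = S.take P.length := by
      have h1 := prefix_eq_take hP
      rw [List.take_take, Nat.min_eq_left hPlen] at h1
      exact h1
    have h2 := hfk P.length (by omega)
    rw [← hPeq] at h2
    exact h2
  have hS2 : S = S.take (m - 1) ++ false :: S.drop m := by
    conv_lhs => rw [← List.take_append_drop (m - 1) S]
    congr 1
    rw [List.drop_eq_getElem_cons hm1, hlet, show m - 1 + 1 = m by omega]
  refine ⟨i + m, w.take i, S.take (m - 1), S.drop m, hBdyck, ?_, ?_, ?_⟩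
  · conv_lhs => rw [hsplit, hS2]
    simp
  · simp
    omega
  · simp
    omega
end Exists
section ExistsFalse
open List

variable {w : List Bool} {i : ℕ}

lemma dif_cons (x : Bool) (l : List Bool) : dif (x :: l) = dif [x] + dif l := by
  rw [show x :: l = [x] ++ l from rfl, dif_append]

lemma exists_matched_of_false (hw : IsDyck w) (hi : w[i]? = some false) :
    ∃ j, Matched w j i := by
  obtain ⟨hwd, hwp⟩ := isDyck_iff.mp hw
  have hil : i < w.length := by
    by_contra hc
    rw [List.getElem?_eq_none (by omega)] at hi
    exact nomatch hi
  have hival : w[i] = false := by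
    rw [List.getElem?_eq_getElem hil] at hi
    exact Option.some.inj hi
  have hTlen : (w.take i).length = i := by simp; omega
  have h0 : -dif ((w.take i).drop (i - 0)) = 0 := by
    rw [Nat.sub_zero, List.drop_eq_nil_of_le (by omega)]
    simp
  have hstep : ∀ k < i,
      -dif ((w.take i).drop (i - (k + 1))) = -dif ((w.take i).drop (i - k)) + 1 ∨
      -dif ((w.take i).drop (i - (k + 1))) = -dif ((w.take i).drop (i - k)) - 1 := by
    intro k hk
    have hidx : i - (k + 1) < (w.take i).length := by omega
    have hdrop : (w.take i).drop (i - (k + 1)) =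
        (w.take i)[i - (k + 1)] :: (w.take i).drop (i - k) := by
      rw [List.drop_eq_getElem_cons hidx, show i - (k + 1) + 1 = i - k by omega]
    rw [hdrop, dif_cons]
    cases hb : (w.take i)[i - (k + 1)] with
    | true => left; simp [dif]; try omega
    | false => right; simp [dif]; try omega
  have htake : w.take (i + 1) = w.take i ++ [false] := by
    rw [List.take_succ, List.getElem?_eq_getElem hil, hival]; rfl
  have hM : 1 ≤ -dif ((w.take i).drop (i - i)) := by
    rw [Nat.sub_self, List.drop_zero]
    have h1 := hwp (w.take (i + 1)) (List.take_prefix _ _)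
    rw [htake, dif_append] at h1
    have : dif [false] = 1 := by simp [dif]
    omega
  obtain ⟨m, hm0, hmM, hfm, hfk⟩ :=
    exists_first (fun k => -dif ((w.take i).drop (i - k))) i h0 hstep hM
  have hprev : -dif ((w.take i).drop (i - (m - 1))) ≤ 0 := by
    rcases Nat.eq_zero_or_pos (m - 1) with h | h
    · rw [h]; exact le_of_eq h0
    · exact hfk _ (by omega)
  have hstep' := hstep (m - 1) (by omega)
  rw [show m - 1 + 1 = m by omega] at hstep'
  have hfm1 : -dif ((w.take i).drop (i - (m - 1))) = 0 := by omega
  have haT : i - m < (w.take i).length := by omega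
  have hsub : i - (m - 1) = (i - m) + 1 := by omega
  have hdropa : (w.take i).drop (i - m) =
      (w.take i)[i - m] :: (w.take i).drop ((i - m) + 1) := by
    rw [List.drop_eq_getElem_cons haT]
  have ha : (w.take i)[i - m] = true := by
    cases hb : (w.take i)[i - m] with
    | true => rfl
    | false =>
      exfalso
      rw [hdropa, hb, dif_cons] at hfm
      rw [hsub] at hfm1
      have : dif [false] = 1 := by simp [dif]
      omega
  have hBdyck : IsDyck ((w.take i).drop ((i - m) + 1)) := by
    rw [isDyck_iff]
    have hBd : dif ((w.take i).drop ((i - m) + 1)) = 0 := by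
      rw [hsub] at hfm1; omega
    refine ⟨hBd, fun P hP => ?_⟩
    have hBlen : ((w.take i).drop ((i - m) + 1)).length = m - 1 := by simp; omega
    have hq : P.length ≤ m - 1 := le_trans hP.length_le (le_of_eq hBlen)
    have hsplitB : (w.take i).drop ((i - m) + 1) =
        P ++ ((w.take i).drop ((i - m) + 1)).drop P.length := by
      conv_lhs => rw [← List.take_append_drop P.length ((w.take i).drop ((i - m) + 1))]
      rw [← prefix_eq_take hP]
    have hdd : ((w.take i).drop ((i - m) + 1)).drop P.length =
        (w.take i).drop (i - (m - 1 - P.length)) := by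
      rw [List.drop_drop]
      congr 1
      omega
    have h2 : -dif ((w.take i).drop (i - (m - 1 - P.length))) ≤ 0 :=
      hfk _ (by omega)
    rw [hsplitB, dif_append] at hBd
    rw [hdd] at hBd
    omega
  have hw2 : w = w.take i ++ false :: w.drop (i + 1) := by
    conv_lhs => rw [← List.take_append_drop i w]
    congr 1
    rw [List.drop_eq_getElem_cons hil, hival]
  have hT2 : w.take i = (w.take i).take (i - m) ++ true :: (w.take i).drop ((i - m) + 1) := by
    conv_lhs => rw [← List.take_append_drop (i - m) (w.take i)]
    congr 1
    rw [List.drop_eq_getElem_cons haT, ha]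
  refine ⟨i - m, (w.take i).take (i - m), (w.take i).drop ((i - m) + 1),
    w.drop (i + 1), hBdyck, ?_, ?_, ?_⟩
  · conv_lhs => rw [hw2, hT2]
    simp
  · simp; omega
  · simp; omega
end ExistsFalse
section MatchFun
open List

variable {w : List Bool} {i j : ℕ}

noncomputable def mP (w : List Bool) (i : ℕ) : ℕ :=
  if h : ∃ j, MatchPair w i j then h.choose else 0

lemma MatchPair.lt_length_left (h : MatchPair w i j) : i < w.length := by
  rcases h with h | h
  · exact lt_trans h.lt h.lt_length
  · exact h.lt_length

lemma MatchPair.lt_length_right (h : MatchPair w i j) : j < w.length :=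
  h.symm.lt_length_left

lemma MatchPair.ne (h : MatchPair w i j) : i ≠ j := by
  rcases h with h | h
  · exact Nat.ne_of_lt h.lt
  · exact (Nat.ne_of_lt h.lt).symm

lemma exists_matchPair (hw : IsDyck w) (hi : i < w.length) : ∃ j, MatchPair w i j := by
  cases hb : w[i] with
  | true =>
    obtain ⟨j, hj⟩ := exists_matched_of_true hw (by rw [List.getElem?_eq_getElem hi, hb])
    exact ⟨j, Or.inl hj⟩
  | false =>
    obtain ⟨j, hj⟩ := exists_matched_of_false hw (by rw [List.getElem?_eq_getElem hi, hb])
    exact ⟨j, Or.inr hj⟩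

lemma mP_matchPair (hw : IsDyck w) (hi : i < w.length) : MatchPair w i (mP w i) := by
  have h := exists_matchPair hw hi
  rw [mP, dif_pos h]
  exact h.choose_spec

lemma mP_eq (hw : IsDyck w) (h : MatchPair w i j) : mP w i = j :=
  (mP_matchPair hw h.lt_length_left).unique h

lemma mP_invol (hw : IsDyck w) (hi : i < w.length) : mP w (mP w i) = i :=
  mP_eq hw (mP_matchPair hw hi).symm

lemma mP_lt_length (hw : IsDyck w) (hi : i < w.length) : mP w i < w.length :=
  (mP_matchPair hw hi).lt_length_right

lemma mP_ne (hw : IsDyck w) (hi : i < w.length) : mP w i ≠ i :=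
  fun h => (mP_matchPair hw hi).ne h.symm

lemma getElem_true_iff (hw : IsDyck w) (hi : i < w.length) :
    w[i] = true ↔ i < mP w i := by
  rcases mP_matchPair hw hi with h | h
  · have h1 := h.getElem_left
    rw [List.getElem?_eq_getElem hi] at h1
    simp at h1
    simp [h1, h.lt]
  · have h1 := h.getElem_right
    rw [List.getElem?_eq_getElem hi] at h1
    simp at h1
    simp [h1]
    have := h.lt
    omega

end MatchFun
section Zig

/-- Inverse of the reading order `zigR r (2*n)` on `[0, 2n)`. -/
def invZigR (r n q : ℕ) : ℕ :=
  if q < 2 * r then q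
  else if q < n + r then 2 * (q - r)
  else 2 * (2 * n + r - 1 - q) + 1

variable {r n p q : ℕ}

lemma zig_lt (hr : r ≤ n) (hp : p < 2 * n) : zigR r (2 * n) p < 2 * n := by
  unfold zigR; split_ifs <;> omega

lemma invZig_lt (hr : r ≤ n) (hq : q < 2 * n) : invZigR r n q < 2 * n := by
  unfold invZigR; split_ifs <;> omega

lemma invZig_zig (hr : r ≤ n) (hp : p < 2 * n) :
    invZigR r n (zigR r (2 * n) p) = p := by
  unfold zigR invZigR; split_ifs <;> omega

lemma zig_invZig (hr : r ≤ n) (hq : q < 2 * n) :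
    zigR r (2 * n) (invZigR r n q) = q := by
  unfold zigR invZigR; split_ifs <;> omega

end Zig
section Outside

variable {w : List Bool} {a b x y : ℕ}

lemma matchPair_outside (hab : Matched w a b) (hxy : MatchPair w x y)
    (hx : x < a ∨ b < x) : y < a ∨ b < y := by
  have hab' := hab.lt
  by_contra hc
  push_neg at hc
  obtain ⟨hya, hyb⟩ := hc
  rcases hxy with h | h
  · -- Matched w x y, x < y
    have hxy' := h.lt
    rcases hx with hx | hx
    · -- x < a ≤ y ≤ b
      rcases Nat.lt_or_ge a y with hay | hay
      · rcases Nat.lt_or_ge y b with hyb' | hyb'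
        · -- a < y < b : height contradiction
          have e1 := h.hgt_eq
          have e2 := hab.hgt_lt (k := y + 1) (by omega) (by omega)
          have e3 := h.hgt_lt (k := a) hx (by omega)
          omega
        · -- y = b
          have hyb2 : y = b := by omega
          subst hyb2
          have := h.unique_left hab
          omega
      · -- y = a : letter clash
        have hya2 : y = a := by omega
        subst hya2
        have h1 := h.getElem_right
        have h2 := hab.getElem_left
        rw [h1] at h2
        exact Bool.noConfusion (Option.some.inj h2)
    · omega
  · -- Matched w y x, y < x
    have hxy' := h.lt
    rcases Nat.lt_or_ge a y with hay | hay
    · rcases Nat.lt_or_ge y b with hyb' | hyb'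
      · -- a < y < b
        rcases hx with hx | hx
        · omega
        · have e1 := h.hgt_eq
          have e2 := h.hgt_lt (k := b + 1) (by omega) (by omega)
          have e3 := hab.hgt_lt (k := y) hay (by omega)
          have e4 := hab.hgt_eq
          omega
      · -- y = b : letter clash
        have hyb2 : y = b := by omega
        subst hyb2
        have h1 := h.getElem_left
        have h2 := hab.getElem_right
        rw [h1] at h2
        exact Bool.noConfusion (Option.some.inj h2)
    · -- y = a
      have hya2 : y = a := by omega
      subst hya2
      have := h.unique_right hab
      omega

end Outside

section Tau
open List

/-- position of the match of the `p`-th read step, in reading order. -/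
noncomputable def tauR (r n : ℕ) (w : List Bool) (p : ℕ) : ℕ :=
  invZigR r n (mP w (zigR r (2 * n) p))

variable {r n p : ℕ} {w : List Bool}
variable (hw : IsDyck w) (hlen : w.length = 2 * n) (hrn : r ≤ n)
include hw hlen hrn

lemma zig_lt_len (hp : p < 2 * n) : zigR r (2 * n) p < w.length := by
  rw [hlen]; exact zig_lt hrn hp

lemma mP_zig_lt (hp : p < 2 * n) : mP w (zigR r (2 * n) p) < 2 * n := by
  have h := mP_lt_length hw (zig_lt_len hw hlen hrn hp)
  omega

lemma tau_lt (hp : p < 2 * n) : tauR r n w p < 2 * n := by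
  unfold tauR
  exact invZig_lt hrn (mP_zig_lt hw hlen hrn hp)

lemma zig_tau (hp : p < 2 * n) :
    zigR r (2 * n) (tauR r n w p) = mP w (zigR r (2 * n) p) := by
  unfold tauR
  exact zig_invZig hrn (mP_zig_lt hw hlen hrn hp)

lemma tau_invol (hp : p < 2 * n) : tauR r n w (tauR r n w p) = p := by
  conv_lhs => rw [tauR, zig_tau hw hlen hrn hp]
  rw [mP_invol hw (zig_lt_len hw hlen hrn hp), invZig_zig hrn hp]

lemma tau_ne (hp : p < 2 * n) : tauR r n w p ≠ p := by
  intro h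
  have h2 := zig_tau hw hlen hrn hp
  rw [h] at h2
  exact mP_ne hw (zig_lt_len hw hlen hrn hp) h2.symm

end Tau
section Counting
open List Finset

lemma psiR_length (r : ℕ) (w : List Bool) : (psiR r w).length = w.length := by
  simp [psiR]

lemma count_take_succ' {l : List Bool} {p : ℕ} (x : Bool) (hp : p < l.length) :
    (l.take (p + 1)).count x = (l.take p).count x + if l[p] = x then 1 else 0 := by
  rw [List.take_succ, List.getElem?_eq_getElem hp, List.count_append]
  by_cases h : l[p] = x
  · simp [h]
  · simp [List.count_cons, h]

lemma filter_range_succ_card (P : ℕ → Prop) [DecidablePred P] (p : ℕ) :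
    ((Finset.range (p + 1)).filter P).card
      = ((Finset.range p).filter P).card + (if P p then 1 else 0) := by
  rw [Finset.range_add_one, Finset.filter_insert]
  split_ifs with h
  · rw [Finset.card_insert_of_notMem (by simp)]
  · rfl

lemma isDyck_drop_of_take {l : List Bool} {p : ℕ} (h : IsDyck l)
    (h2 : IsDyck (l.take p)) : IsDyck (l.drop p) := by
  rw [isDyck_iff] at h h2 ⊢
  have hsplit : l = l.take p ++ l.drop p := (List.take_append_drop p l).symm
  have hdif : dif l = dif (l.take p) + dif (l.drop p) := by
    conv_lhs => rw [hsplit]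
    exact dif_append _ _
  refine ⟨by omega, fun P hP => ?_⟩
  obtain ⟨t, ht⟩ := hP
  have hpre : l.take p ++ P <+: l := ⟨t, by rw [List.append_assoc, ht]; exact (List.take_append_drop p l)⟩
  have := h.2 _ hpre
  rw [dif_append] at this
  have := h2.1
  omega

noncomputable def Ufin (r n : ℕ) (w : List Bool) (p : ℕ) : Finset ℕ :=
  (Finset.range p).filter (fun q => q < tauR r n w q)

noncomputable def Dfin (r n : ℕ) (w : List Bool) (p : ℕ) : Finset ℕ :=
  (Finset.range p).filter (fun q => tauR r n w q < q)

noncomputable def Ofin (r n : ℕ) (w : List Bool) (p : ℕ) : Finset ℕ :=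
  (Finset.range p).filter (fun q => p ≤ tauR r n w q)

variable {r n p : ℕ} {w : List Bool}
variable (hw : IsDyck w) (hlen : w.length = 2 * n) (hrn : r ≤ n)
include hw hlen hrn

lemma psiR_getElem_true_iff (hp : p < 2 * n) (h : p < (psiR r w).length) :
    (psiR r w)[p] = true ↔ p < tauR r n w p := by
  have hcond : (psiR r w)[p] =
      if (∃ p' : ℕ, p' < p ∧ MatchPair w (zigR r w.length p') (zigR r w.length p))
      then false else true := by
    simp [psiR]
  rw [hcond]
  split_ifs with hC
  · simp only [Bool.false_eq_true, false_iff]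
    obtain ⟨p', hp', hmp⟩ := hC
    rw [hlen] at hmp
    have hmPeq : mP w (zigR r (2 * n) p) = zigR r (2 * n) p' := mP_eq hw hmp.symm
    have : tauR r n w p = p' := by
      unfold tauR
      rw [hmPeq, invZig_zig hrn (by omega)]
    omega
  · simp only [true_iff]
    push_neg at hC
    rw [hlen] at hC
    have hne := tau_ne hw hlen hrn hp
    by_contra hle
    have hτ : tauR r n w p < p := by omega
    have hmp : MatchPair w (zigR r (2 * n) (tauR r n w p)) (zigR r (2 * n) p) := by
      rw [zig_tau hw hlen hrn hp]
      exact (mP_matchPair hw (zig_lt_len hw hlen hrn hp)).symm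
    exact hC _ hτ hmp

lemma psiR_getElem_false_iff (hp : p < 2 * n) (h : p < (psiR r w).length) :
    (psiR r w)[p] = false ↔ tauR r n w p < p := by
  have h1 := psiR_getElem_true_iff hw hlen hrn hp h
  have hne := tau_ne hw hlen hrn hp
  cases hb : (psiR r w)[p] with
  | true => rw [hb] at h1; simp at h1 ⊢; omega
  | false => rw [hb] at h1; simp at h1 ⊢; omega

lemma count_take_psiR (hp : p ≤ 2 * n) :
    ((psiR r w).take p).count true = (Ufin r n w p).card ∧
    ((psiR r w).take p).count false = (Dfin r n w p).card := by
  induction p with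
  | zero => simp [Ufin, Dfin]
  | succ p ih =>
    obtain ⟨ih1, ih2⟩ := ih (by omega)
    have hplen : p < (psiR r w).length := by rw [psiR_length, hlen]; omega
    have hne := tau_ne hw hlen hrn (show p < 2 * n by omega)
    constructor
    · rw [count_take_succ' true hplen, ih1]
      unfold Ufin
      rw [filter_range_succ_card]
      congr 1
      by_cases hq : p < tauR r n w p
      · rw [if_pos hq, if_pos ((psiR_getElem_true_iff hw hlen hrn (by omega) hplen).mpr hq)]
      · rw [if_neg hq, if_neg (by
          rw [psiR_getElem_true_iff hw hlen hrn (by omega) hplen]; exact hq)]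
    · rw [count_take_succ' false hplen, ih2]
      unfold Dfin
      rw [filter_range_succ_card]
      congr 1
      by_cases hq : tauR r n w p < p
      · rw [if_pos hq, if_pos ((psiR_getElem_false_iff hw hlen hrn (by omega) hplen).mpr hq)]
      · rw [if_neg hq, if_neg (by
          rw [psiR_getElem_false_iff hw hlen hrn (by omega) hplen]; exact hq)]

lemma Ufin_card_eq (hp : p ≤ 2 * n) :
    (Ufin r n w p).card = (Dfin r n w p).card + (Ofin r n w p).card := by
  have himg : (Dfin r n w p).image (tauR r n w)
      = (Ufin r n w p).filter (fun q => tauR r n w q < p) := by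
    ext q
    simp only [Ufin, Dfin, Finset.mem_image, Finset.mem_filter, Finset.mem_range]
    constructor
    · rintro ⟨q', ⟨hq'p, hq'd⟩, rfl⟩
      have hinv := tau_invol hw hlen hrn (show q' < 2 * n by omega)
      refine ⟨⟨by omega, by omega⟩, by omega⟩
    · rintro ⟨⟨hqp, hqu⟩, hτq⟩
      refine ⟨tauR r n w q, ⟨hτq, ?_⟩, tau_invol hw hlen hrn (by omega)⟩
      rw [tau_invol hw hlen hrn (by omega)]
      omega
  have hinj : ((Dfin r n w p).image (tauR r n w)).card = (Dfin r n w p).card := by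
    apply Finset.card_image_of_injOn
    intro x hx y hy hxy
    simp only [Dfin, Finset.coe_filter, Finset.mem_range, Set.mem_setOf_eq] at hx hy
    have h1 := tau_invol hw hlen hrn (show x < 2 * n by omega)
    have h2 := tau_invol hw hlen hrn (show y < 2 * n by omega)
    rw [← h1, ← h2, hxy]
  have hOeq : (Ufin r n w p).filter (fun q => ¬ tauR r n w q < p) = Ofin r n w p := by
    ext q
    simp only [Ufin, Ofin, Finset.mem_filter, Finset.mem_range]
    omega
  have hsplit := Finset.card_filter_add_card_filter_not
    (s := Ufin r n w p) (p := fun q => tauR r n w q < p)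
  rw [hOeq] at hsplit
  rw [himg] at hinj
  omega

lemma take_psiR_isDyck_iff (hp : p ≤ 2 * n) :
    IsDyck ((psiR r w).take p) ↔ ∀ q < p, tauR r n w q < p := by
  obtain ⟨hcT, hcF⟩ := count_take_psiR hw hlen hrn hp
  constructor
  · intro h
    have hcnt := h.1
    rw [hcT, hcF, Ufin_card_eq hw hlen hrn hp] at hcnt
    have hO : (Ofin r n w p).card = 0 := by omega
    rw [Finset.card_eq_zero] at hO
    intro q hq
    by_contra hc
    have : q ∈ Ofin r n w p := by
      simp only [Ofin, Finset.mem_filter, Finset.mem_range]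
      omega
    rw [hO] at this
    exact absurd this (Finset.notMem_empty q)
  · intro hcl
    constructor
    · rw [hcT, hcF, Ufin_card_eq hw hlen hrn hp]
      have hO : Ofin r n w p = ∅ := by
        rw [Ofin, Finset.filter_eq_empty_iff]
        intro q hq
        rw [Finset.mem_range] at hq
        have := hcl q hq
        omega
      rw [hO]
      simp
    · intro P hP
      have hPpre : P <+: psiR r w := hP.trans (List.take_prefix _ _)
      have hPlen : P.length ≤ p := le_trans hP.length_le (by simp)
      have hPeq : P = (psiR r w).take P.length := prefix_eq_take hPpre
      obtain ⟨hT, hF⟩ := count_take_psiR hw hlen hrn (show P.length ≤ 2 * n by omega)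
      rw [hPeq, hT, hF, Ufin_card_eq hw hlen hrn (show P.length ≤ 2 * n by omega)]
      omega

lemma psiR_isDyck : IsDyck (psiR r w) := by
  have h := (take_psiR_isDyck_iff hw hlen hrn (le_refl (2 * n))).mpr
    (fun q hq => tau_lt hw hlen hrn hq)
  rwa [List.take_of_length_le (by rw [psiR_length, hlen])] at h

end Counting
section Main
open List

lemma length_eq_counts (l : List Bool) : l.length = l.count true + l.count false := by
  induction l with
  | nil => simp
  | cons x t ih => cases x <;> simp [List.count_cons] <;> omega

variable {r n : ℕ} {w : List Bool}
variable (hw : IsDyck w) (hlen : w.length = 2 * n) (hrn : r ≤ n)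
include hw hlen hrn

lemma tunnel_gives_hill {A B C : List Bool} (hB : IsDyck B)
    (hdec : w = A ++ true :: (B ++ false :: C))
    (hAC : A.length = C.length + 2 * r) :
    ∃ X Y : List Bool, IsDyck X ∧ IsDyck Y ∧
      psiR r w = X ++ true :: false :: Y ∧
      X.length = 2 * (A.length - r) ∧ 2 * r ≤ X.length := by
  obtain ⟨a, hadef⟩ : ∃ a, a = A.length := ⟨_, rfl⟩
  obtain ⟨b, hbdef⟩ : ∃ b, b = a + B.length + 1 := ⟨_, rfl⟩
  obtain ⟨p, hpdef⟩ : ∃ p, p = 2 * (a - r) := ⟨_, rfl⟩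
  have hlens := congrArg List.length hdec
  simp at hlens
  have hmatch : Matched w a b := ⟨A, B, C, hB, hdec, hadef.symm, hbdef⟩
  have h2ra : 2 * r ≤ a := by omega
  have hab : a + b = 2 * n + 2 * r - 1 := by omega
  have han : a < n + r := by omega
  have hbn : n + r ≤ b ∧ b < 2 * n := by omega
  have hp2n : p + 2 ≤ 2 * n := by omega
  have hzp : zigR r (2 * n) p = a := by unfold zigR; split_ifs <;> omega
  have hzp1 : zigR r (2 * n) (p + 1) = b := by unfold zigR; split_ifs <;> omega
  have hmPa : mP w a = b := mP_eq hw (Or.inl hmatch)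
  have hmPb : mP w b = a := mP_eq hw (Or.inr hmatch)
  have hτp : tauR r n w p = p + 1 := by
    unfold tauR; rw [hzp, hmPa]; unfold invZigR; split_ifs <;> omega
  have hτp1 : tauR r n w (p + 1) = p := by
    unfold tauR; rw [hzp1, hmPb]; unfold invZigR; split_ifs <;> omega
  have hclosed : ∀ q < p, tauR r n w q < p := by
    intro q hq
    have hzq : zigR r (2 * n) q < a ∨ b < zigR r (2 * n) q := by
      unfold zigR; split_ifs <;> omega
    have houts := matchPair_outside hmatch
      (mP_matchPair hw (zig_lt_len hw hlen hrn (show q < 2 * n by omega))) hzq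
    have hmlt := mP_zig_lt hw hlen hrn (show q < 2 * n by omega)
    unfold tauR invZigR
    split_ifs <;> omega
  have hclosed2 : ∀ q < p + 2, tauR r n w q < p + 2 := by
    intro q hq
    rcases Nat.lt_or_ge q p with h | h
    · have := hclosed q h; omega
    · have : q = p ∨ q = p + 1 := by omega
      rcases this with rfl | rfl
      · omega
      · rw [hτp1]; omega
  have hXdyck : IsDyck ((psiR r w).take p) :=
    (take_psiR_isDyck_iff hw hlen hrn (by omega)).mpr hclosed
  have htake2 : IsDyck ((psiR r w).take (p + 2)) :=
    (take_psiR_isDyck_iff hw hlen hrn (by omega)).mpr hclosed2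
  have hYdyck : IsDyck ((psiR r w).drop (p + 2)) :=
    isDyck_drop_of_take (psiR_isDyck hw hlen hrn) htake2
  have hplen : p + 1 < (psiR r w).length := by rw [psiR_length, hlen]; omega
  have hlp : (psiR r w)[p]'(by omega) = true :=
    (psiR_getElem_true_iff hw hlen hrn (by omega) (by omega)).mpr (by omega)
  have hlp1 : (psiR r w)[p + 1]'hplen = false :=
    (psiR_getElem_false_iff hw hlen hrn (by omega) hplen).mpr (by omega)
  have hdecomp : psiR r w
      = (psiR r w).take p ++ true :: false :: (psiR r w).drop (p + 2) := by
    conv_lhs => rw [← List.take_append_drop p (psiR r w)]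
    congr 1
    rw [List.drop_eq_getElem_cons (show p < (psiR r w).length by omega), hlp]
    congr 1
    rw [List.drop_eq_getElem_cons hplen, hlp1]
  refine ⟨_, _, hXdyck, hYdyck, hdecomp, ?_, ?_⟩
  · rw [List.length_take, psiR_length]; omega
  · rw [List.length_take, psiR_length]; omega

lemma hill_gives_tunnel {X Y : List Bool} (hX : IsDyck X) (hY : IsDyck Y)
    (hdec : psiR r w = X ++ true :: false :: Y) (hXr : 2 * r ≤ X.length) :
    ∃ A B C : List Bool, IsDyck B ∧ w = A ++ true :: (B ++ false :: C) ∧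
      A.length = C.length + 2 * r ∧ X.length = 2 * (A.length - r) := by
  obtain ⟨p, hpdef⟩ : ∃ p, p = X.length := ⟨_, rfl⟩
  have hlength := congrArg List.length hdec
  rw [psiR_length, hlen] at hlength
  simp at hlength
  have hXev : p = 2 * (X.count true) := by
    have h1 := length_eq_counts X
    have h2 := hX.1
    omega
  obtain ⟨k, hk⟩ : ∃ k, p = 2 * k := ⟨X.count true, hXev⟩
  have hp2 : p + 2 ≤ 2 * n := by omega
  have hXeq : X = (psiR r w).take p := by
    rw [hdec, hpdef, List.take_left' rfl]
  have hclosed := (take_psiR_isDyck_iff hw hlen hrn (by omega)).mp (hXeq ▸ hX)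
  have hplen : p + 1 < (psiR r w).length := by rw [psiR_length, hlen]; omega
  have hlp : (psiR r w)[p]'(by omega) = true := by
    have : (psiR r w)[p]? = some true := by
      rw [hdec, List.getElem?_append_right (by omega)]
      rw [show p - X.length = 0 by omega]
      rfl
    rw [List.getElem?_eq_getElem (by omega)] at this
    exact Option.some.inj this
  have hlp1 : (psiR r w)[p + 1]'hplen = false := by
    have : (psiR r w)[p + 1]? = some false := by
      rw [hdec, List.getElem?_append_right (by omega)]
      rw [show p + 1 - X.length = 1 by omega]
      simp
    rw [List.getElem?_eq_getElem hplen] at this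
    exact Option.some.inj this
  have hτp : p < tauR r n w p :=
    (psiR_getElem_true_iff hw hlen hrn (by omega) (by omega)).mp hlp
  have hτ1 : tauR r n w (p + 1) < p + 1 :=
    (psiR_getElem_false_iff hw hlen hrn (by omega) hplen).mp hlp1
  have hτp1 : tauR r n w (p + 1) = p := by
    by_contra hc
    have h2 : tauR r n w (p + 1) < p := by omega
    have h3 := hclosed _ h2
    rw [tau_invol hw hlen hrn (by omega)] at h3
    omega
  have hτpeq : tauR r n w p = p + 1 := by
    have h1 := tau_invol hw hlen hrn (show p + 1 < 2 * n by omega)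
    rw [hτp1] at h1
    exact h1
  have hzp : zigR r (2 * n) p = k + r := by unfold zigR; split_ifs <;> omega
  have hzp1 : zigR r (2 * n) (p + 1) = 2 * n + r - 1 - k := by
    unfold zigR; split_ifs <;> omega
  have hmPa : mP w (k + r) = 2 * n + r - 1 - k := by
    have h1 := congrArg (zigR r (2 * n)) hτpeq
    rw [zig_tau hw hlen hrn (by omega), hzp, hzp1] at h1
    exact h1
  have hmp : MatchPair w (k + r) (2 * n + r - 1 - k) := by
    have h := mP_matchPair hw (show k + r < w.length by omega)
    rwa [hmPa] at h
  have hmatched : Matched w (k + r) (2 * n + r - 1 - k) := by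
    rcases hmp with h | h
    · exact h
    · exfalso; have := h.lt; omega
  obtain ⟨A, B, C, hB, hdecw, hA, hb⟩ := hmatched
  have hlensw := congrArg List.length hdecw
  simp at hlensw
  exact ⟨A, B, C, hB, hdecw, by omega, by omega⟩

end Main
/-- tunnels of `D ∈ D_n` with midpoint at `x = n + r` (i.e. `|A| = |C| + 2r`)
correspond in number to hills of `D' = Ψ_r(D)` in `x > 2r` (i.e. `|X| ≥ 2r`). -/
theorem tunEq_eq_numHillsAfter (r n : ℕ) (D : List Bool) (hD : IsDyck D)
    (hlen : D.length = 2 * n) :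
    tunEq r D = numHillsAfter r (psiR r D) := by
  classical
  unfold tunEq numHillsAfter
  by_cases hcase : r + 1 ≤ n
  · have hrn : r ≤ n := by omega
    have himg : {i : ℕ | ∃ X Y : List Bool, IsDyck X ∧ IsDyck Y ∧
          psiR r D = X ++ true :: false :: Y ∧ X.length = i ∧ 2 * r ≤ X.length}
        = (fun i => 2 * (i - r)) ''
          {i : ℕ | ∃ A B C : List Bool, IsDyck B ∧ D = A ++ true :: (B ++ false :: C) ∧
            A.length = i ∧ A.length = C.length + 2 * r} := by
      ext j
      simp only [Set.mem_setOf_eq, Set.mem_image]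
      constructor
      · rintro ⟨X, Y, hX, hY, hdec, rfl, hXr⟩
        obtain ⟨A, B, C, hB, hdecw, hAC, hXl⟩ :=
          hill_gives_tunnel hD hlen hrn hX hY hdec hXr
        exact ⟨A.length, ⟨A, B, C, hB, hdecw, rfl, hAC⟩, hXl.symm⟩
      · rintro ⟨i, ⟨A, B, C, hB, hdecw, rfl, hAC⟩, rfl⟩
        obtain ⟨X, Y, hX, hY, hdec, hXl, hXr⟩ :=
          tunnel_gives_hill hD hlen hrn hB hdecw hAC
        exact ⟨X, Y, hX, hY, hdec, hXl, hXr⟩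
    rw [himg, Set.ncard_image_of_injOn]
    intro x hx y hy hxy
    simp only [Set.mem_setOf_eq] at hx hy
    obtain ⟨A, B, C, hB, _, hA, hAC⟩ := hx
    obtain ⟨A', B', C', hB', _, hA', hAC'⟩ := hy
    have hxy' : 2 * (x - r) = 2 * (y - r) := hxy
    omega
  · have h1 : {i : ℕ | ∃ A B C : List Bool, IsDyck B ∧
        D = A ++ true :: (B ++ false :: C) ∧
        A.length = i ∧ A.length = C.length + 2 * r} = ∅ := by
      ext i
      simp only [Set.mem_setOf_eq, Set.mem_empty_iff_false, iff_false]
      rintro ⟨A, B, C, hB, hdec, hA, hAC⟩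
      have := congrArg List.length hdec
      simp at this
      omega
    have h2 : {i : ℕ | ∃ X Y : List Bool, IsDyck X ∧ IsDyck Y ∧
        psiR r D = X ++ true :: false :: Y ∧ X.length = i ∧ 2 * r ≤ X.length} = ∅ := by
      ext i
      simp only [Set.mem_setOf_eq, Set.mem_empty_iff_false, iff_false]
      rintro ⟨X, Y, hX, hY, hdec, hXl, hXr⟩
      have h3 := congrArg List.length hdec
      rw [psiR_length, hlen] at h3
      simp at h3
      omega
    rw [h1, h2]

end DyckBij
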